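/- Let K be a commutative ring, B an n×m matrix and D an m×n matrix over K, and let 0 ≤ i ≤ k ≤ n ≤ m. Then Σ_{X ⊆ [n], |X| = k} Σ_{S ⊆ [m], |S| = k} Σ_{W ⊆ X, |W| = k−i} Σ_{Z ⊆ S, |Z| = k−i} det(D_{Z,W}) · det(B_{W,Z}) = binom(n−k+i, i) · binom(m−k+i, i) · [B·D]^{(k−i)}, where the binomial coefficients denote the images of these natural numbers in K. -/

import Mathlib

open Finset

open Matrix Finset Equiv

section InjEquiv

variable {j m : ℕ}

private lemma orderEmbOfFin_inj_of_eq {s t : Finset (Fin m)}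
    (hs : s.card = j) (ht : t.card = j) (hst : s = t) {a b : Fin j}
    (h : s.orderEmbOfFin hs a = t.orderEmbOfFin ht b) : a = b := by
  subst hst
  exact Fin.ext (Finset.orderEmbOfFin_eq_orderEmbOfFin_iff.mp h)

private lemma imgCard (f : Fin j → Fin m) (hf : Function.Injective f) :
    (univ.image f).card = j := by
  rw [Finset.card_image_of_injective _ hf, card_univ, Fintype.card_fin]

/-- The permutation comparing an injective `f` with the monotone enumeration of its image. -/
noncomputable def toPerm (f : Fin j → Fin m) (hf : Function.Injective f) : Equiv.Perm (Fin j) :=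
  Equiv.ofBijective
    (fun x => ((univ.image f).orderIsoOfFin (imgCard f hf)).symm
      ⟨f x, Finset.mem_image_of_mem f (mem_univ x)⟩)
    (by
      rw [← Finite.injective_iff_bijective]
      intro a b hab
      apply hf
      simpa using congrArg Subtype.val
        (congrArg ((univ.image f).orderIsoOfFin (imgCard f hf)) hab))

lemma orderEmbOfFin_toPerm (f : Fin j → Fin m) (hf : Function.Injective f) (x : Fin j) :
    (univ.image f).orderEmbOfFin (imgCard f hf) (toPerm f hf x) = f x := by
  rw [← Finset.coe_orderIsoOfFin_apply]
  simp [toPerm]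

/-- Injective maps `Fin j → Fin m` correspond to pairs of a `j`-subset and a permutation. -/
noncomputable def injEquivSubsetPerm :
    {f : Fin j → Fin m // Function.Injective f} ≃
      {z : Finset (Fin m) // z.card = j} × Equiv.Perm (Fin j) where
  toFun F := (⟨univ.image F.1, imgCard F.1 F.2⟩, toPerm F.1 F.2)
  invFun P := ⟨fun x => P.1.1.orderEmbOfFin P.1.2 (P.2 x),
    fun a b h => P.2.injective ((P.1.1.orderEmbOfFin P.1.2).injective h)⟩
  left_inv := by
    rintro ⟨f, hf⟩
    exact Subtype.ext (funext fun x => orderEmbOfFin_toPerm f hf x)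
  right_inv := by
    rintro ⟨⟨z, hz⟩, σ⟩
    have hg : Function.Injective (fun x => z.orderEmbOfFin hz (σ x)) :=
      fun a b h => σ.injective ((z.orderEmbOfFin hz).injective h)
    have himg : univ.image (fun x => z.orderEmbOfFin hz (σ x)) = z := by
      rw [← Finset.coe_inj, Finset.coe_image, Finset.coe_univ, Set.image_univ]
      have : Set.range (fun x => z.orderEmbOfFin hz (σ x)) =
          Set.range (z.orderEmbOfFin hz) := Function.Surjective.range_comp σ.surjective _
      rw [this, Finset.range_orderEmbOfFin]
    refine Prod.ext (Subtype.ext himg) (Equiv.ext fun x => ?_)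
    exact orderEmbOfFin_inj_of_eq (imgCard _ hg) hz himg (orderEmbOfFin_toPerm _ hg x)

@[simp] lemma injEquivSubsetPerm_symm_apply
    (P : {z : Finset (Fin m) // z.card = j} × Equiv.Perm (Fin j)) (x : Fin j) :
    ((injEquivSubsetPerm.symm P : {f : Fin j → Fin m // Function.Injective f}) : Fin j → Fin m) x
      = P.1.1.orderEmbOfFin P.1.2 (P.2 x) := rfl

end InjEquiv

/-- **Cauchy–Binet formula.** -/
theorem cauchy_binet {K : Type*} [CommRing K] {j m : ℕ}
    (A : Matrix (Fin j) (Fin m) K) (C : Matrix (Fin m) (Fin j) K) :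
    (A * C).det = ∑ Z : {z : Finset (Fin m) // z.card = j},
      (A.submatrix id (Z.1.orderEmbOfFin Z.2)).det *
        (C.submatrix (Z.1.orderEmbOfFin Z.2) id).det := by
  have step1 : (A * C).det
      = ∑ f : Fin j → Fin m, (∏ x, A x (f x)) • (C.submatrix f id).det := by
    have hrow : (A * C) = Matrix.of (fun p => ∑ x : Fin m, A p x • C x) := by
      ext p q
      simp [Matrix.mul_apply]
    rw [hrow]
    exact ((Matrix.detRowAlternating (R := K) (n := Fin j)).toMultilinearMap.map_sum
        (g := fun p x => A p x • C x)).trans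
      (Finset.sum_congr rfl fun r _ =>
        (Matrix.detRowAlternating (R := K) (n := Fin j)).toMultilinearMap.map_smul_univ
          (fun p => A p (r p)) (fun p => C (r p)))
  rw [step1]
  have step2 : ∑ f : Fin j → Fin m, (∏ x, A x (f x)) • (C.submatrix f id).det
      = ∑ f ∈ univ.filter (fun f : Fin j → Fin m => Function.Injective f),
          (∏ x, A x (f x)) • (C.submatrix f id).det := by
    refine (Finset.sum_subset (Finset.filter_subset _ _) fun f _ hf => ?_).symm
    have hni : ¬ Function.Injective f := by simpa using hf
    obtain ⟨a, b, hab, hne⟩ : ∃ a b, f a = f b ∧ a ≠ b := by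
      rw [Function.Injective] at hni
      push_neg at hni
      obtain ⟨a, b, h1, h2⟩ := hni
      exact ⟨a, b, h1, h2⟩
    have hz : (C.submatrix f id).det = 0 := by
      refine Matrix.det_zero_of_row_eq hne ?_
      funext q
      simp [hab]
    rw [hz, smul_zero]
  rw [step2, Finset.sum_subtype (p := fun f : Fin j → Fin m => Function.Injective f)
    (univ.filter _) (by simp)]
  rw [← injEquivSubsetPerm.symm.sum_comp
    (fun F : {f : Fin j → Fin m // Function.Injective f} =>
      (∏ x, A x (F.1 x)) • (C.submatrix F.1 id).det)]
  rw [Fintype.sum_prod_type]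
  refine Finset.sum_congr rfl fun Z _ => ?_
  set e := Z.1.orderEmbOfFin Z.2 with he
  have key : ∀ σ : Equiv.Perm (Fin j),
      (C.submatrix (fun x => e (σ x)) id).det
        = (Equiv.Perm.sign σ : K) * (C.submatrix e id).det := by
    intro σ
    have : (C.submatrix (fun x => e (σ x)) id) = (C.submatrix e id).submatrix σ id := rfl
    rw [this, Matrix.det_permute]
  have detA : (A.submatrix id e).det
      = ∑ σ : Equiv.Perm (Fin j), ((Equiv.Perm.sign σ : ℤ) : K) * ∏ x, A x (e (σ x)) := by
    rw [← Matrix.det_transpose, Matrix.det_apply']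
    rfl
  rw [detA, Finset.sum_mul]
  refine Finset.sum_congr rfl fun σ _ => ?_
  have hF : (↑(injEquivSubsetPerm.symm (Z, σ)) : Fin j → Fin m) = fun x => e (σ x) := rfl
  rw [hF, key σ, smul_eq_mul]
  push_cast
  ring


lemma card_supersets {α : Type*} [DecidableEq α] [Fintype α] (W : Finset α) (k : ℕ)
    (hk : W.card ≤ k) :
    ((univ.powersetCard k).filter (fun X => W ⊆ X)).card
      = (Fintype.card α - W.card).choose (k - W.card) := by
  rw [← Finset.card_compl W, ← Finset.card_powersetCard (k - W.card) Wᶜ]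
  refine Finset.card_nbij' (fun X => X \ W) (fun Y => Y ∪ W) ?_ ?_ ?_ ?_
  · intro X hX
    rw [Finset.mem_coe, Finset.mem_filter, Finset.mem_powersetCard] at hX
    obtain ⟨⟨_, hcard⟩, hWX⟩ := hX
    rw [Finset.mem_coe, Finset.mem_powersetCard]
    constructor
    · intro a ha
      rw [Finset.mem_compl]
      exact (Finset.mem_sdiff.mp ha).2
    · rw [Finset.card_sdiff_of_subset hWX, hcard]
  · intro Y hY
    rw [Finset.mem_coe, Finset.mem_powersetCard] at hY
    obtain ⟨hYW, hYcard⟩ := hY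
    have hdisj : Disjoint Y W := by
      rw [Finset.disjoint_right]
      intro a haW haY
      exact (Finset.mem_compl.mp (hYW haY)) haW
    rw [Finset.mem_coe, Finset.mem_filter, Finset.mem_powersetCard]
    refine ⟨⟨Finset.subset_univ _, ?_⟩, Finset.subset_union_right⟩
    rw [Finset.card_union_of_disjoint hdisj, hYcard]
    omega
  · intro X hX
    rw [Finset.mem_coe, Finset.mem_filter] at hX
    exact Finset.sdiff_union_of_subset hX.2
  · intro Y hY
    rw [Finset.mem_coe, Finset.mem_powersetCard] at hY
    have hdisj : Disjoint Y W := by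
      rw [Finset.disjoint_right]
      intro a haW haY
      exact (Finset.mem_compl.mp (hY.1 haY)) haW
    show (Y ∪ W) \ W = Y
    rw [Finset.union_sdiff_cancel_right hdisj]

lemma sum_powersetCard_swap {β M : Type*} [DecidableEq β] [Fintype β] [AddCommMonoid M]
    (r k : ℕ) (hrk : r ≤ k) (g : Finset β → M) :
    ∑ X ∈ univ.powersetCard k, ∑ W ∈ (univ.powersetCard r).filter (fun w => w ⊆ X), g W
      = ∑ W ∈ univ.powersetCard r, ((Fintype.card β - r).choose (k - r)) • g W := by
  simp_rw [Finset.sum_filter]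
  rw [Finset.sum_comm]
  refine Finset.sum_congr rfl fun W hW => ?_
  have hWcard : W.card = r := (Finset.mem_powersetCard.mp hW).2
  rw [← Finset.sum_filter, Finset.sum_const, card_supersets W k (by omega), hWcard]

section MinorTerm

variable {K : Type*} [CommRing K] {n m : ℕ}

/-- Auxiliary non-dependent form of the summand. -/
noncomputable def minorTerm (B : Matrix (Fin n) (Fin m) K) (D : Matrix (Fin m) (Fin n) K)
    (r : ℕ) (w : Finset (Fin n)) (z : Finset (Fin m)) : K :=
  if h : w.card = r ∧ z.card = r then
    (D.submatrix (z.orderEmbOfFin h.2) (w.orderEmbOfFin h.1)).det *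
      (B.submatrix (w.orderEmbOfFin h.1) (z.orderEmbOfFin h.2)).det
  else 0

lemma minorTerm_eq (B : Matrix (Fin n) (Fin m) K) (D : Matrix (Fin m) (Fin n) K)
    {r : ℕ} {w : Finset (Fin n)} {z : Finset (Fin m)} (hw : w.card = r) (hz : z.card = r) :
    minorTerm B D r w z
      = (D.submatrix (z.orderEmbOfFin hz) (w.orderEmbOfFin hw)).det *
          (B.submatrix (w.orderEmbOfFin hw) (z.orderEmbOfFin hz)).det := by
  rw [minorTerm, dif_pos ⟨hw, hz⟩]

end MinorTerm



/-- `[M]^(j)`: the sum of all principal `j × j` minors of `M`. -/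
noncomputable def principalMinorSum {K : Type*} [CommRing K] {n : ℕ}
    (M : Matrix (Fin n) (Fin n) K) (j : ℕ) : K :=
  ∑ T : {t : Finset (Fin n) // t.card = j},
    (M.submatrix (T.1.orderEmbOfFin T.2) (T.1.orderEmbOfFin T.2)).det

theorem sum_det_mul_det_subsets
    {K : Type*} [CommRing K] {n m : ℕ}
    (B : Matrix (Fin n) (Fin m) K) (D : Matrix (Fin m) (Fin n) K)
    (i k : ℕ) (hik : i ≤ k) (hkn : k ≤ n) (hnm : n ≤ m) :
    (∑ X : {s : Finset (Fin n) // s.card = k},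
      ∑ S : {s : Finset (Fin m) // s.card = k},
        ∑ W : {w : Finset (Fin n) // w ⊆ X.1 ∧ w.card = k - i},
          ∑ Z : {z : Finset (Fin m) // z ⊆ S.1 ∧ z.card = k - i},
            (D.submatrix (Z.1.orderEmbOfFin Z.2.2) (W.1.orderEmbOfFin W.2.2)).det *
              (B.submatrix (W.1.orderEmbOfFin W.2.2) (Z.1.orderEmbOfFin Z.2.2)).det)
      = ((n - k + i).choose i : ℕ) * ((m - k + i).choose i : ℕ) *
          principalMinorSum (B * D) (k - i) := by
  classical
  -- Step 1: rewrite the left-hand side as sums over `powersetCard` finsets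
  have L1 : ∀ (x : Finset (Fin n)) (s : Finset (Fin m)),
      (∑ W : {w : Finset (Fin n) // w ⊆ x ∧ w.card = k - i},
        ∑ Z : {z : Finset (Fin m) // z ⊆ s ∧ z.card = k - i},
          (D.submatrix (Z.1.orderEmbOfFin Z.2.2) (W.1.orderEmbOfFin W.2.2)).det *
            (B.submatrix (W.1.orderEmbOfFin W.2.2) (Z.1.orderEmbOfFin Z.2.2)).det)
      = ∑ W ∈ (univ.powersetCard (k - i)).filter (fun w => w ⊆ x),
          ∑ Z ∈ (univ.powersetCard (k - i)).filter (fun z => z ⊆ s),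
            minorTerm B D (k - i) W Z := by
    intro x s
    rw [Finset.sum_subtype (p := fun w : Finset (Fin n) => w ⊆ x ∧ w.card = k - i)
      ((univ.powersetCard (k - i)).filter (fun w => w ⊆ x))
      (by intro w; simp [Finset.mem_powersetCard, and_comm])
      (fun w => ∑ Z ∈ (univ.powersetCard (k - i)).filter (fun z => z ⊆ s),
        minorTerm B D (k - i) w Z)]
    refine Finset.sum_congr rfl fun W _ => ?_
    rw [Finset.sum_subtype (p := fun z : Finset (Fin m) => z ⊆ s ∧ z.card = k - i)
      ((univ.powersetCard (k - i)).filter (fun z => z ⊆ s))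
      (by intro z; simp [Finset.mem_powersetCard, and_comm])
      (fun z => minorTerm B D (k - i) W.1 z)]
    exact Finset.sum_congr rfl fun Z _ => (minorTerm_eq B D W.2.2 Z.2.2).symm
  have L0 : (∑ X : {s : Finset (Fin n) // s.card = k},
      ∑ S : {s : Finset (Fin m) // s.card = k},
        ∑ W : {w : Finset (Fin n) // w ⊆ X.1 ∧ w.card = k - i},
          ∑ Z : {z : Finset (Fin m) // z ⊆ S.1 ∧ z.card = k - i},
            (D.submatrix (Z.1.orderEmbOfFin Z.2.2) (W.1.orderEmbOfFin W.2.2)).det *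
              (B.submatrix (W.1.orderEmbOfFin W.2.2) (Z.1.orderEmbOfFin Z.2.2)).det)
      = ∑ X ∈ univ.powersetCard k, ∑ S ∈ (univ : Finset (Fin m)).powersetCard k,
          ∑ W ∈ (univ.powersetCard (k - i)).filter (fun w => w ⊆ X),
            ∑ Z ∈ (univ.powersetCard (k - i)).filter (fun z => z ⊆ S),
              minorTerm B D (k - i) W Z := by
    rw [Finset.sum_subtype (p := fun s : Finset (Fin n) => s.card = k)
      (univ.powersetCard k) (by intro a; simp [Finset.mem_powersetCard])
      (fun x => ∑ S ∈ (univ : Finset (Fin m)).powersetCard k,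
        ∑ W ∈ (univ.powersetCard (k - i)).filter (fun w => w ⊆ x),
          ∑ Z ∈ (univ.powersetCard (k - i)).filter (fun z => z ⊆ S),
            minorTerm B D (k - i) W Z)]
    refine Finset.sum_congr rfl fun X _ => ?_
    rw [Finset.sum_subtype (p := fun s : Finset (Fin m) => s.card = k)
      (univ.powersetCard k) (by intro a; simp [Finset.mem_powersetCard])
      (fun s => ∑ W ∈ (univ.powersetCard (k - i)).filter (fun w => w ⊆ X.1),
          ∑ Z ∈ (univ.powersetCard (k - i)).filter (fun z => z ⊆ s),
            minorTerm B D (k - i) W Z)]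
    exact Finset.sum_congr rfl fun S _ => L1 X.1 S.1
  rw [L0]
  -- Step 2: swap sums and count supersets
  have hswapS : ∀ x : Finset (Fin n),
      ∑ S ∈ (univ : Finset (Fin m)).powersetCard k,
        ∑ W ∈ (univ.powersetCard (k - i)).filter (fun w => w ⊆ x),
          ∑ Z ∈ (univ.powersetCard (k - i)).filter (fun z => z ⊆ S),
            minorTerm B D (k - i) W Z
      = ∑ W ∈ (univ.powersetCard (k - i)).filter (fun w => w ⊆ x),
          ∑ Z ∈ (univ : Finset (Fin m)).powersetCard (k - i),
            ((m - k + i).choose i) • minorTerm B D (k - i) W Z := by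
    intro x
    rw [Finset.sum_comm]
    refine Finset.sum_congr rfl fun W _ => ?_
    rw [sum_powersetCard_swap (k - i) k (by omega) (fun z => minorTerm B D (k - i) W z)]
    have h1 : Fintype.card (Fin m) - (k - i) = m - k + i := by
      rw [Fintype.card_fin]; omega
    have h2 : k - (k - i) = i := by omega
    rw [h1, h2]
  simp_rw [hswapS]
  rw [sum_powersetCard_swap (k - i) k (by omega)
    (fun w => ∑ Z ∈ (univ : Finset (Fin m)).powersetCard (k - i),
      ((m - k + i).choose i) • minorTerm B D (k - i) w Z)]
  have h1 : Fintype.card (Fin n) - (k - i) = n - k + i := by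
    rw [Fintype.card_fin]; omega
  have h2 : k - (k - i) = i := by omega
  rw [h1, h2]
  -- Step 3: identify the remaining double sum via Cauchy–Binet
  have hfinal : ∑ W ∈ (univ : Finset (Fin n)).powersetCard (k - i),
      ∑ Z ∈ (univ : Finset (Fin m)).powersetCard (k - i), minorTerm B D (k - i) W Z
      = principalMinorSum (B * D) (k - i) := by
    rw [principalMinorSum]
    rw [Finset.sum_subtype (p := fun t : Finset (Fin n) => t.card = k - i)
      (univ.powersetCard (k - i)) (by intro a; simp [Finset.mem_powersetCard])
      (fun w => ∑ Z ∈ (univ : Finset (Fin m)).powersetCard (k - i),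
        minorTerm B D (k - i) w Z)]
    refine Finset.sum_congr rfl fun T _ => ?_
    set e := T.1.orderEmbOfFin T.2 with he
    rw [Finset.sum_subtype (p := fun z : Finset (Fin m) => z.card = k - i)
      (univ.powersetCard (k - i)) (by intro a; simp [Finset.mem_powersetCard])
      (fun z => minorTerm B D (k - i) T.1 z)]
    have hprod : (B.submatrix (⇑e) id) * (D.submatrix id (⇑e)) = (B * D).submatrix (⇑e) (⇑e) := by
      ext p q
      simp [Matrix.mul_apply]
    rw [← hprod, cauchy_binet]
    refine Finset.sum_congr rfl fun Z _ => ?_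
    rw [minorTerm_eq B D T.2 Z.2]
    rw [Matrix.submatrix_submatrix, Matrix.submatrix_submatrix]
    simp [Function.comp_def, mul_comm]
    rfl
  calc ∑ W ∈ (univ : Finset (Fin n)).powersetCard (k - i),
        ((n - k + i).choose i) • ∑ Z ∈ (univ : Finset (Fin m)).powersetCard (k - i),
          ((m - k + i).choose i) • minorTerm B D (k - i) W Z
      = ((n - k + i).choose i : K) * ((m - k + i).choose i : K) *
          ∑ W ∈ (univ : Finset (Fin n)).powersetCard (k - i),
            ∑ Z ∈ (univ : Finset (Fin m)).powersetCard (k - i),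
              minorTerm B D (k - i) W Z := by
        rw [Finset.mul_sum]
        refine Finset.sum_congr rfl fun W _ => ?_
        rw [Finset.smul_sum, Finset.mul_sum]
        refine Finset.sum_congr rfl fun Z _ => ?_
        simp [nsmul_eq_mul]
        ring
    _ = ((n - k + i).choose i : K) * ((m - k + i).choose i : K) *
          principalMinorSum (B * D) (k - i) := by rw [hfinal]
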